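/- Let f : ℝ^d → ℝ be C² with L_H-Lipschitz Hessian, and let x, d ∈ ℝ^d, g ∈ ℝ^d, H symmetric, ε_H > 0, ε_g > 0, ζ ∈ (0,1), δ_g ≥ 0, δ_H ≥ 0 satisfy: (i) ‖r̂‖ ≤ (1/2)ε_H·ζ·‖d‖ where r̂ = (H + 2ε_H·I)d + g, (ii) ‖∇f(x) - g‖ ≤ δ_g, (iii) ‖∇²f(x) - H‖ ≤ δ_H, (iv) δ_H ≤ ε_H/2, (v) δ_g ≤ ((1-ζ)/8)·max(ε_g, ε_H‖d‖), and (vi) ‖d‖ ≤ ε_g/ε_H. Then ‖∇f(x + d)‖ ≤ (L_H/2)·(ε_g/ε_H)² + 4·ε_g. -/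

import Mathlib

open RealInnerProductSpace intervalIntegral

-- Taylor remainder for the derivative
theorem taylor_fderiv {E : Type*} [NormedAddCommGroup E] [NormedSpace ℝ E]
    (f : E → ℝ) (hf : ContDiff ℝ 2 f) (L : ℝ) (hL : 0 ≤ L)
    (hlip : ∀ u v : E, ‖fderiv ℝ (fderiv ℝ f) u - fderiv ℝ (fderiv ℝ f) v‖ ≤ L * ‖u - v‖)
    (x d : E) :
    ‖fderiv ℝ f (x + d) - fderiv ℝ f x - fderiv ℝ (fderiv ℝ f) x d‖ ≤ L / 2 * ‖d‖ ^ 2 := by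
  set D := fderiv ℝ f
  have hD : ContDiff ℝ 1 D := hf.fderiv_right (by norm_num)
  have hDdiff : Differentiable ℝ D := hD.differentiable (by norm_num)
  set D2 := fderiv ℝ D
  have hD2cont : Continuous D2 := by
    have : LipschitzWith (Real.toNNReal L) D2 := by
      refine LipschitzWith.of_dist_le_mul fun u v => ?_
      simpa [dist_eq_norm, Real.coe_toNNReal L hL] using hlip u v
    exact this.continuous
  set φ : ℝ → (E →L[ℝ] ℝ) := fun t => D (x + t • d) - t • (D2 x d)
  have hφ : ∀ t : ℝ, HasDerivAt φ (D2 (x + t • d) d - D2 x d) t := by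
    intro t
    have h1 : HasDerivAt (fun t : ℝ => x + t • d) d t := by
      simpa using ((hasDerivAt_id t).smul_const d).const_add x
    have h2 : HasDerivAt (fun t : ℝ => D (x + t • d)) (D2 (x + t • d) d) t :=
      (hDdiff (x + t • d)).hasFDerivAt.comp_hasDerivAt t h1
    have h3 := h2.sub ((hasDerivAt_id t).smul_const (D2 x d))
    simp only [one_smul] at h3
    exact h3
  have key : φ 1 - φ 0 = ∫ t in (0:ℝ)..1, (D2 (x + t • d) d - D2 x d) := by
    rw [intervalIntegral.integral_eq_sub_of_hasDerivAt (fun t _ => hφ t)]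
    have : Continuous fun t : ℝ => D2 (x + t • d) d - D2 x d := by
      have : Continuous fun t : ℝ => D2 (x + t • d) :=
        hD2cont.comp (by continuity)
      exact (this.clm_apply continuous_const).sub continuous_const
    exact this.intervalIntegrable 0 1
  have hnorm : ‖φ 1 - φ 0‖ ≤ L / 2 * ‖d‖ ^ 2 := by
    rw [key]
    have hb : ∀ t ∈ Set.Icc (0:ℝ) 1, ‖D2 (x + t • d) d - D2 x d‖ ≤ L * ‖d‖ ^ 2 * t := by
      intro t ht
      have h1 : ‖(D2 (x + t • d) - D2 x) d‖ ≤ ‖D2 (x + t • d) - D2 x‖ * ‖d‖ :=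
        (D2 (x + t • d) - D2 x).le_opNorm d
      have h2 : ‖D2 (x + t • d) - D2 x‖ ≤ L * (t * ‖d‖) := by
        have := hlip (x + t • d) x
        simpa [norm_smul, abs_of_nonneg ht.1] using this
      calc ‖D2 (x + t • d) d - D2 x d‖ = ‖(D2 (x + t • d) - D2 x) d‖ := by
            simp [ContinuousLinearMap.sub_apply]
        _ ≤ ‖D2 (x + t • d) - D2 x‖ * ‖d‖ := h1
        _ ≤ L * (t * ‖d‖) * ‖d‖ := by
            exact mul_le_mul_of_nonneg_right h2 (norm_nonneg d)
        _ = L * ‖d‖ ^ 2 * t := by ring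
    calc ‖∫ t in (0:ℝ)..1, (D2 (x + t • d) d - D2 x d)‖
        ≤ |∫ t in (0:ℝ)..1, L * ‖d‖ ^ 2 * t| := by
          refine le_trans (intervalIntegral.norm_integral_le_of_norm_le zero_le_one ?_ ?_) (le_abs_self _)
          · exact Filter.Eventually.of_forall fun t ht => hb t ⟨le_of_lt ht.1, ht.2⟩
          · exact (continuous_const.mul continuous_id).intervalIntegrable 0 1
      _ = L / 2 * ‖d‖ ^ 2 := by
          rw [intervalIntegral.integral_const_mul, integral_id]
          rw [abs_of_nonneg (by positivity)]
          ring
  have : φ 1 - φ 0 = fderiv ℝ f (x + d) - fderiv ℝ f x - fderiv ℝ (fderiv ℝ f) x d := by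
    simp [φ, D, D2]
    abel
  rwa [this] at hnorm

set_option maxHeartbeats 800000 in
theorem gradient_bound_at_termination {n : ℕ}
    (f : EuclideanSpace ℝ (Fin n) → ℝ) (hf : ContDiff ℝ 2 f)
    (L_H ε_H ε_g ζ δ_g δ_H : ℝ) (hL : 0 < L_H) (hεH : 0 < ε_H) (hεg : 0 < ε_g)
    (hζ : ζ ∈ Set.Ioo (0:ℝ) 1) (hδg0 : 0 ≤ δ_g) (hδH0 : 0 ≤ δ_H)
    (hlip : ∀ u v : EuclideanSpace ℝ (Fin n),
      ‖fderiv ℝ (fderiv ℝ f) u - fderiv ℝ (fderiv ℝ f) v‖ ≤ L_H * ‖u - v‖)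
    (x d g : EuclideanSpace ℝ (Fin n))
    (A : EuclideanSpace ℝ (Fin n) →L[ℝ] EuclideanSpace ℝ (Fin n))
    (hsymm : ∀ u v : EuclideanSpace ℝ (Fin n), ⟪A u, v⟫ = ⟪u, A v⟫)
    (hres : ‖A d + (2 * ε_H) • d + g‖ ≤ (1 / 2) * ε_H * ζ * ‖d‖)
    (hgrad : ‖gradient f x - g‖ ≤ δ_g)
    (hA : ∀ u : EuclideanSpace ℝ (Fin n),
      ‖fderiv ℝ (fderiv ℝ f) x u - innerSL ℝ (A u)‖ ≤ δ_H * ‖u‖)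
    (hδH : δ_H ≤ ε_H / 2)
    (hδg : δ_g ≤ ((1 - ζ) / 8) * max ε_g (ε_H * ‖d‖))
    (hdsmall : ‖d‖ ≤ ε_g / ε_H) :
    ‖gradient f (x + d)‖ ≤ L_H / 2 * (ε_g / ε_H) ^ 2 + 4 * ε_g := by
  set D := fderiv ℝ f with hDdef
  set D2 := fderiv ℝ D with hD2def
  -- norm of gradient equals norm of fderiv
  have hgy : ∀ y : EuclideanSpace ℝ (Fin n),
      gradient f y = (InnerProductSpace.toDual ℝ (EuclideanSpace ℝ (Fin n))).symm (D y) :=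
    fun y => rfl
  have hgradnorm : ∀ y : EuclideanSpace ℝ (Fin n), ‖gradient f y‖ = ‖D y‖ := fun y => by
    rw [hgy]; exact LinearIsometryEquiv.norm_map _ _
  have hinner_eq : ∀ y : EuclideanSpace ℝ (Fin n),
      InnerProductSpace.toDual ℝ (EuclideanSpace ℝ (Fin n)) (gradient f y) = D y := fun y => by
    rw [hgy]; exact LinearIsometryEquiv.apply_symm_apply _ _
  have htoDual : ∀ v : EuclideanSpace ℝ (Fin n), (InnerProductSpace.toDual ℝ (EuclideanSpace ℝ (Fin n)) v : EuclideanSpace ℝ (Fin n) →L[ℝ] ℝ) = innerSL ℝ v := by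
    intro v; ext u; simp [InnerProductSpace.toDual_apply_apply]
  have hDx : D x = innerSL ℝ (gradient f x) := by rw [← hinner_eq, htoDual]
  -- Taylor bound
  have htaylor : ‖D (x + d) - D x - D2 x d‖ ≤ L_H / 2 * ‖d‖ ^ 2 :=
    taylor_fderiv f hf L_H hL.le hlip x d
  -- decomposition
  have hdecomp : D (x + d) = (D (x + d) - D x - D2 x d) + (D2 x d - innerSL ℝ (A d))
      + (innerSL ℝ (gradient f x) - innerSL ℝ g)
      + innerSL ℝ (A d + (2 * ε_H) • d + g) - innerSL ℝ ((2 * ε_H) • d) := by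
    rw [hDx]
    simp only [map_add]
    abel
  set m := ‖d‖ with hm
  have hm0 : 0 ≤ m := norm_nonneg d
  have hεm : ε_H * m ≤ ε_g := by
    rw [hm]
    calc ε_H * ‖d‖ ≤ ε_H * (ε_g / ε_H) := by
          exact mul_le_mul_of_nonneg_left hdsmall hεH.le
      _ = ε_g := by field_simp
  have hmax : max ε_g (ε_H * ‖d‖) = ε_g := max_eq_left hεm
  rw [hmax] at hδg
  have hbound : ‖D (x + d)‖ ≤ L_H / 2 * m ^ 2 + δ_H * m + δ_g
      + (1 / 2) * ε_H * ζ * m + 2 * ε_H * m := by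
    rw [hdecomp]
    have h2 : ‖D2 x d - innerSL ℝ (A d)‖ ≤ δ_H * m := hA d
    have h3 : ‖innerSL ℝ (gradient f x) - innerSL ℝ g‖ ≤ δ_g := by
      rw [← map_sub]
      rw [innerSL_apply_norm]
      exact hgrad
    have h4 : ‖innerSL ℝ (A d + (2 * ε_H) • d + g)‖ ≤ (1 / 2) * ε_H * ζ * m := by
      rw [innerSL_apply_norm]; exact hres
    have h5 : ‖innerSL ℝ ((2 * ε_H) • d)‖ ≤ 2 * ε_H * m := by
      rw [innerSL_apply_norm, norm_smul]
      rw [hm]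
      have : |(2 : ℝ) * ε_H| = 2 * ε_H := abs_of_nonneg (by positivity)
      rw [Real.norm_eq_abs, this]
    calc ‖(D (x + d) - D x - D2 x d) + (D2 x d - innerSL ℝ (A d))
          + (innerSL ℝ (gradient f x) - innerSL ℝ g)
          + innerSL ℝ (A d + (2 * ε_H) • d + g) - innerSL ℝ ((2 * ε_H) • d)‖
        ≤ ‖(D (x + d) - D x - D2 x d)‖ + ‖(D2 x d - innerSL ℝ (A d))‖
          + ‖(innerSL ℝ (gradient f x) - innerSL ℝ g)‖
          + ‖innerSL ℝ (A d + (2 * ε_H) • d + g)‖ + ‖innerSL ℝ ((2 * ε_H) • d)‖ := by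
          refine le_trans (norm_sub_le _ _) (add_le_add ?_ le_rfl)
          refine le_trans (norm_add_le _ _) (add_le_add ?_ le_rfl)
          exact le_trans (norm_add_le _ _) (add_le_add (norm_add_le _ _) le_rfl)
      _ ≤ _ := by
          gcongr <;> assumption
  rw [hgradnorm]
  obtain ⟨hζ0, hζ1⟩ := hζ
  have hmle : m ≤ ε_g / ε_H := hdsmall
  have hq : L_H / 2 * m ^ 2 ≤ L_H / 2 * (ε_g / ε_H) ^ 2 := by
    gcongr
  nlinarith [mul_le_mul_of_nonneg_left hεm (le_of_lt hζ0), hεm, hδg, hδH,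
    mul_le_mul_of_nonneg_right hδH hm0, mul_le_mul_of_nonneg_left hεm hζ0.le]
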